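/- Let G and H be similar relational structures and let π be an automorphism of H of prime order p. Then the number of homomorphisms from G to H is congruent modulo p to the number of homomorphisms from G to the substructure H^π of H induced by the fixed points of π. -/

import Mathlib

/-- If `π` is an automorphism of order `p` (`p` prime) of a relational
structure `H`, then for any similar structure `G` the number of homomorphisms
`G → H` is congruent mod `p` to the number of homomorphisms from `G` into the
substructure of `H` induced by the fixed points of `π`. -/
theorem modular_reduction_by_automorphism
    (σ : Type) (ar : σ → ℕ)
    (G H : Type) [Fintype G] [Fintype H]
    (relG : ∀ s : σ, (Fin (ar s) → G) → Prop)
    (relH : ∀ s : σ, (Fin (ar s) → H) → Prop)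
    (p : ℕ) (hp : p.Prime)
    (π : Equiv.Perm H)
    (hπaut : ∀ s t, relH s t ↔ relH s (⇑π ∘ t))
    (hπord : orderOf π = p) :
    Nat.card {f : G → H // ∀ s t, relG s t → relH s (f ∘ t)} ≡
      Nat.card {f : G → {a : H // π a = a} //
        ∀ s t, relG s t → relH s (fun i => ((f (t i) : {a : H // π a = a}) : H))}
      [MOD p] := by
  classical
  haveI : Fact p.Prime := ⟨hp⟩
  -- every integer power of π preserves relH
  have key : ∀ (n : ℤ) (s : σ) (t : Fin (ar s) → H),
      relH s t ↔ relH s (⇑(π ^ n) ∘ t) := by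
    intro n
    induction n using Int.induction_on with
    | zero => intro s t; simp
    | succ n ih =>
        intro s t
        have h1 : π ^ ((n : ℤ) + 1) = π ^ (n : ℤ) * π := by
          rw [zpow_add_one]
        have hc : ⇑(π ^ ((n : ℤ) + 1)) ∘ t = ⇑(π ^ (n : ℤ)) ∘ (⇑π ∘ t) := by
          rw [h1]; ext i; simp [Equiv.Perm.mul_apply, Function.comp]
        rw [hc]
        exact (hπaut s t).trans (ih s (⇑π ∘ t))
    | pred n ih =>
        intro s t
        have h1 : π ^ (-(n : ℤ) - 1) = π ^ (-(n : ℤ)) * π⁻¹ := by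
          rw [zpow_sub_one]
        have hc : ⇑(π ^ (-(n : ℤ) - 1)) ∘ t = ⇑(π ^ (-(n : ℤ))) ∘ (⇑π⁻¹ ∘ t) := by
          rw [h1]; ext i; simp [Equiv.Perm.mul_apply, Function.comp]
        have hinv : relH s t ↔ relH s (⇑π⁻¹ ∘ t) := by
          have := hπaut s (⇑π⁻¹ ∘ t)
          have hcomp : ⇑π ∘ (⇑π⁻¹ ∘ t) = t := by
            ext i; simp
          rw [hcomp] at this
          exact this.symm
        rw [hc]
        exact hinv.trans (ih s (⇑π⁻¹ ∘ t))
  -- fixed points of powers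
  have fixaux : ∀ (n : ℤ) (a : H), π a = a → (π ^ n) a = a := by
    intro n
    induction n using Int.induction_on with
    | zero => intro a _; simp
    | succ n ih =>
        intro a ha
        rw [zpow_add_one, Equiv.Perm.mul_apply, ha, ih a ha]
    | pred n ih =>
        intro a ha
        have hinv : π⁻¹ a = a := by
          conv_lhs => rw [← ha]
          simp
        rw [zpow_sub_one, Equiv.Perm.mul_apply, hinv, ih a ha]
  set α := {f : G → H // ∀ s t, relG s t → relH s (f ∘ t)} with hα
  set K := Subgroup.zpowers π with hK
  letI : SMul K α := ⟨fun k f => ⟨⇑(k : Equiv.Perm H) ∘ f.1, by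
    intro s t ht
    obtain ⟨n, hn⟩ := Subgroup.mem_zpowers_iff.mp k.2
    have := (key n s (f.1 ∘ t)).mp (f.2 s t ht)
    rw [hn] at this
    exact this⟩⟩
  letI : MulAction K α :=
    { one_smul := fun f => by
        apply Subtype.ext
        show ⇑((1 : K) : Equiv.Perm H) ∘ f.1 = f.1
        simp
      mul_smul := fun k k' f => by
        apply Subtype.ext
        show ⇑((k * k' : K) : Equiv.Perm H) ∘ f.1
            = ⇑(k : Equiv.Perm H) ∘ (⇑(k' : Equiv.Perm H) ∘ f.1)
        ext x; simp [Equiv.Perm.mul_apply, Function.comp] }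
  have hPK : IsPGroup p K := by
    apply IsPGroup.of_card (n := 1)
    rw [pow_one, hK, Nat.card_zpowers, hπord]
  haveI : Finite α := Subtype.finite
  have hmod := hPK.card_modEq_card_fixedPoints α
  -- identify fixed points with homs into the fixed substructure
  have hequiv : (MulAction.fixedPoints K α) ≃
      {f : G → {a : H // π a = a} //
        ∀ s t, relG s t → relH s (fun i => ((f (t i) : {a : H // π a = a}) : H))} := by
    refine ⟨fun f => ⟨fun x => ⟨f.1.1 x, ?_⟩, ?_⟩, fun g => ⟨⟨fun x => (g.1 x).1, g.2⟩, ?_⟩, ?_, ?_⟩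
    · have hf := f.2 ⟨π, Subgroup.mem_zpowers π⟩
      have : ⇑π ∘ f.1.1 = f.1.1 := congrArg Subtype.val hf
      exact congrFun this x
    · intro s t ht
      exact f.1.2 s t ht
    · intro k
      apply Subtype.ext
      obtain ⟨n, hn⟩ := Subgroup.mem_zpowers_iff.mp k.2
      show ⇑(k : Equiv.Perm H) ∘ (fun x => (g.1 x).1) = fun x => (g.1 x).1
      ext x
      have := fixaux n (g.1 x).1 (g.1 x).2
      rw [hn] at this
      exact this
    · intro f; apply Subtype.ext; apply Subtype.ext; rfl
    · intro g; apply Subtype.ext; funext x; apply Subtype.ext; rfl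
  calc Nat.card α ≡ Nat.card (MulAction.fixedPoints K α) [MOD p] := hmod
    _ = _ := Nat.card_congr hequiv
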